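/- Let f = (u, v, s, t) : ℝ⁴ → ℝ⁴ be anti-i-holomorphic, and let p ∈ ℝ⁴ be a point at which u_y·u_z − u_x·u_w = −s_y·s_z + s_x·s_w (equivalently, ⟨∂f/∂y(p), ∂f/∂z(p)⟩ = 0 = ⟨∂f/∂x(p), ∂f/∂w(p)⟩). Then Γ_f has equal Kähler angles at p, with cos²θ = [(s_x − u_z)² + (s_y − u_w)²] / [(1 + ‖∂f/∂x‖²)(1 + ‖∂f/∂z‖²) − ⟨∂f/∂x, ∂f/∂z⟩²], all partial derivatives being evaluated at p (the denominator is ≥ 1 by Cauchy–Schwarz). -/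

import Mathlib

/-!
STATEMENT 4: If `f = (u,v,s,t) : ℝ⁴ → ℝ⁴` is anti-i-holomorphic and at `p` one has
`⟨∂f/∂y, ∂f/∂z⟩ = 0 = ⟨∂f/∂x, ∂f/∂w⟩`, then the graph `Γ_f` has equal Kähler
angles at `p` with
`cos²θ = [(s_x − u_z)² + (s_y − u_w)²] /
         [(1 + ‖∂f/∂x‖²)(1 + ‖∂f/∂z‖²) − ⟨∂f/∂x, ∂f/∂z⟩²]`.
Equal Kähler angles at `p` with angle `θ` means that
`S_p = (id + Df(p)ᵀ∘Df(p))⁻¹ ∘ (Df(p)ᵀ − Df(p))` satisfies `S_p∘S_p = −cos²θ·id`.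
-/

open scoped RealInnerProductSpace

noncomputable section

abbrev E4 : Type := EuclideanSpace ℝ (Fin 4)

/-- standard basis vectors of ℝ⁴ -/
noncomputable def e (j : Fin 4) : E4 := EuclideanSpace.single j (1 : ℝ)

/-- The orthogonal complex structure `i(x,y,z,w) = (−y, x, −w, z)` of ℝ⁴. -/
noncomputable def iC : E4 →L[ℝ] E4 :=
  LinearMap.toContinuousLinearMap
    (Matrix.toEuclideanLin (!![0,-1,0,0; 1,0,0,0; 0,0,0,-1; 0,0,1,0] : Matrix (Fin 4) (Fin 4) ℝ))

/-- The endomorphism `S_p = (id + Df(p)ᵀ ∘ Df(p))⁻¹ ∘ (Df(p)ᵀ − Df(p))` of ℝ⁴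
(the inverse taken in the ring of continuous endomorphisms; `id + Df(p)ᵀ∘Df(p)` is
positive definite, hence invertible). -/
noncomputable def Sp (f : E4 → E4) (p : E4) : E4 →L[ℝ] E4 :=
  Ring.inverse (1 + ContinuousLinearMap.adjoint (fderiv ℝ f p) * fderiv ℝ f p) *
    (ContinuousLinearMap.adjoint (fderiv ℝ f p) - fderiv ℝ f p)

open Matrix

set_option maxHeartbeats 2000000

section Aux

lemma iC_e0 : iC (e 0) = e 1 := by
  ext k
  have h : iC (e 0) k = (!![0,-1,0,0; 1,0,0,0; 0,0,0,-1; 0,0,1,0] *ᵥ Pi.single (0 : Fin 4) (1:ℝ)) k := rfl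
  rw [h, Matrix.mulVec_single]
  fin_cases k <;> simp [e, EuclideanSpace.single_apply, Matrix.vecHead, Matrix.vecTail]

lemma iC_e2 : iC (e 2) = e 3 := by
  ext k
  have h : iC (e 2) k = (!![0,-1,0,0; 1,0,0,0; 0,0,0,-1; 0,0,1,0] *ᵥ Pi.single (2 : Fin 4) (1:ℝ)) k := rfl
  rw [h, Matrix.mulVec_single]
  fin_cases k <;> simp [e, EuclideanSpace.single_apply, Matrix.vecHead, Matrix.vecTail]

lemma iC_apply (v : E4) (k : Fin 4) :
    iC v k = (!![0,-1,0,0; 1,0,0,0; 0,0,0,-1; 0,0,1,0] *ᵥ (fun i => v i)) k := rfl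

lemma clm_of_matrix_apply (M : Matrix (Fin 4) (Fin 4) ℝ) (j k : Fin 4) :
    Matrix.toEuclideanCLM (𝕜 := ℝ) M (e j) k = M k j := by
  show (M *ᵥ Pi.single j 1) k = M k j
  simp [Matrix.mulVec_single]

/-- the matrix `E` below -/
def Emat (aa bb cc dd ee ff gg hh : ℝ) : Matrix (Fin 4) (Fin 4) ℝ :=
    !![(-1)*ff^2*gg + 2*ee*ff*hh + ee^2*gg + dd*ff*gg + (-1)*dd*ee*hh + (-1)*cc*ff*hh + (-1)*cc*ee*gg + bb*dd*ee + (-1)*bb*cc*ff + aa*dd*ff + (-1)*aa*dd^2 + aa*cc*ee + (-1)*aa*cc^2, ff^2*hh + 2*ee*ff*gg + (-1)*ee^2*hh + (-1)*dd*ff*hh + (-1)*dd*ee*gg + (-1)*cc*ff*gg + cc*ee*hh + bb*dd*ff + (-1)*bb*dd^2 + bb*cc*ee + (-1)*bb*cc^2 + (-1)*aa*dd*ee + aa*cc*ff, ee + ee*hh^2 + ee*gg^2 + dd^2*ee + (-1)*cc + (-1)*cc*hh^2 + (-1)*cc*gg^2 + (-1)*cc*dd^2 + cc^2*ee + (-1)*cc^3,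 ff + ff*hh^2 + ff*gg^2 + (-1)*dd + (-1)*dd*hh^2 + (-1)*dd*gg^2 + dd^2*ff + (-1)*dd^3 + cc^2*ff + (-1)*cc^2*dd;
      ff^2*hh + 2*ee*ff*gg + (-1)*ee^2*hh + (-1)*dd*ff*hh + (-1)*dd*ee*gg + (-1)*cc*ff*gg + cc*ee*hh + bb*dd*ff + (-1)*bb*dd^2 + bb*cc*ee + (-1)*bb*cc^2 + (-1)*aa*dd*ee + aa*cc*ff, ff^2*gg + (-2)*ee*ff*hh + (-1)*ee^2*gg + (-1)*dd*ff*gg + dd*ee*hh + cc*ff*hh + cc*ee*gg + (-1)*bb*dd*ee + bb*cc*ff + (-1)*aa*dd*ff + aa*dd^2 + (-1)*aa*cc*ee + aa*cc^2, ff + ff*hh^2 + ff*gg^2 + (-1)*dd + (-1)*dd*hh^2 + (-1)*dd*gg^2 + dd^2*ff + (-1)*dd^3 + cc^2*ff + (-1)*cc^2*dd, (-1)*ee + (-1)*ee*hh^2 + (-1)*ee*gg^2 + (-1)*dd^2*ee + cc + cc*hh^2 + cc*gg^2 + cc*dd^2 + (-1)*cc^2*ee + cc^3;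
      (-1)*ee + (-1)*ee*ff^2 + (-1)*ee^3 + cc + cc*ff^2 + cc*ee^2 + (-1)*bb^2*ee + bb^2*cc + (-1)*aa^2*ee + aa^2*cc, (-1)*ff + (-1)*ff^3 + (-1)*ee^2*ff + dd + dd*ff^2 + dd*ee^2 + (-1)*bb^2*ff + bb^2*dd + (-1)*aa^2*ff + aa^2*dd, (-1)*ff^2*gg + (-1)*ee^2*gg + dd*ff*gg + (-1)*dd*ee*hh + cc*ff*hh + cc*ee*gg + (-1)*bb*dd*ee + (-1)*bb*cc*ff + 2*bb*cc*dd + aa*dd*ff + (-1)*aa*dd^2 + (-1)*aa*cc*ee + aa*cc^2, (-1)*ff^2*hh + (-1)*ee^2*hh + dd*ff*hh + dd*ee*gg + (-1)*cc*ff*gg + cc*ee*hh + (-1)*bb*dd*ff + bb*dd^2 + bb*cc*ee + (-1)*bb*cc^2 + (-1)*aa*dd*ee + (-1)*aa*cc*ff + 2*aa*cc*dd;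
      (-1)*ff + (-1)*ff^3 + (-1)*ee^2*ff + dd + dd*ff^2 + dd*ee^2 + (-1)*bb^2*ff + bb^2*dd + (-1)*aa^2*ff + aa^2*dd, ee + ee*ff^2 + ee^3 + (-1)*cc + (-1)*cc*ff^2 + (-1)*cc*ee^2 + bb^2*ee + (-1)*bb^2*cc + aa^2*ee + (-1)*aa^2*cc, (-1)*ff^2*hh + (-1)*ee^2*hh + dd*ff*hh + dd*ee*gg + (-1)*cc*ff*gg + cc*ee*hh + (-1)*bb*dd*ff + bb*dd^2 + bb*cc*ee + (-1)*bb*cc^2 + (-1)*aa*dd*ee + (-1)*aa*cc*ff + 2*aa*cc*dd, ff^2*gg + ee^2*gg + (-1)*dd*ff*gg + dd*ee*hh + (-1)*cc*ff*hh + (-1)*cc*ee*gg + bb*dd*ee + bb*cc*ff + (-2)*bb*cc*dd + (-1)*aa*dd*ff + aa*dd^2 + aa*cc*ee + (-1)*aa*cc^2]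

lemma key1 (aa bb cc dd ee ff gg hh : ℝ)
    (hk : bb*cc - aa*dd + ff*gg - ee*hh = 0) :
    (1 + (!![aa,bb,cc,dd; bb,-aa,dd,-cc; ee,ff,gg,hh; ff,-ee,hh,-gg] : Matrix (Fin 4) (Fin 4) ℝ)ᵀ * !![aa,bb,cc,dd; bb,-aa,dd,-cc; ee,ff,gg,hh; ff,-ee,hh,-gg]) *
      (((2 + (aa^2+bb^2+ee^2+ff^2) + (cc^2+dd^2+gg^2+hh^2)) : ℝ) • (1 : Matrix (Fin 4) (Fin 4) ℝ) - (1 + (!![aa,bb,cc,dd; bb,-aa,dd,-cc; ee,ff,gg,hh; ff,-ee,hh,-gg] : Matrix (Fin 4) (Fin 4) ℝ)ᵀ * !![aa,bb,cc,dd; bb,-aa,dd,-cc; ee,ff,gg,hh; ff,-ee,hh,-gg])) =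
      (((1+(aa^2+bb^2+ee^2+ff^2))*(1+(cc^2+dd^2+gg^2+hh^2)) - (aa*cc+bb*dd+ee*gg+ff*hh)^2) : ℝ) • 1 := by
  ext i j
  fin_cases i <;> fin_cases j <;>
    simp [Matrix.mul_apply, Fin.sum_univ_four, Matrix.one_apply, Matrix.vecHead, Matrix.vecTail] <;>
    first
      | linear_combination (aa*dd - bb*cc + ee*hh - ff*gg) * hk
      | linear_combination

lemma key2 (aa bb cc dd ee ff gg hh : ℝ) :
    (((2 + (aa^2+bb^2+ee^2+ff^2) + (cc^2+dd^2+gg^2+hh^2)) : ℝ) • (1 : Matrix (Fin 4) (Fin 4) ℝ) - (1 + (!![aa,bb,cc,dd; bb,-aa,dd,-cc; ee,ff,gg,hh; ff,-ee,hh,-gg] : Matrix (Fin 4) (Fin 4) ℝ)ᵀ * !![aa,bb,cc,dd; bb,-aa,dd,-cc; ee,ff,gg,hh; ff,-ee,hh,-gg])) *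
      ((!![aa,bb,cc,dd; bb,-aa,dd,-cc; ee,ff,gg,hh; ff,-ee,hh,-gg] : Matrix (Fin 4) (Fin 4) ℝ)ᵀ - !![aa,bb,cc,dd; bb,-aa,dd,-cc; ee,ff,gg,hh; ff,-ee,hh,-gg]) = Emat aa bb cc dd ee ff gg hh := by
  ext i j
  fin_cases i <;> fin_cases j <;>
    simp [Emat, Matrix.mul_apply, Fin.sum_univ_four, Matrix.one_apply, Matrix.vecHead, Matrix.vecTail] <;>
    ring

lemma key3 (aa bb cc dd ee ff gg hh : ℝ)
    (hk : bb*cc - aa*dd + ff*gg - ee*hh = 0) :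
    Emat aa bb cc dd ee ff gg hh * Emat aa bb cc dd ee ff gg hh =
      (-(((ee-cc)^2+(ff-dd)^2) * ((1+(aa^2+bb^2+ee^2+ff^2))*(1+(cc^2+dd^2+gg^2+hh^2)) - (aa*cc+bb*dd+ee*gg+ff*hh)^2)) : ℝ) • 1 := by
  ext i j
  fin_cases i <;> fin_cases j <;>
    simp [Emat, Matrix.mul_apply, Fin.sum_univ_four, Matrix.one_apply, Matrix.vecHead, Matrix.vecTail] <;>
    first
      | linear_combination (((ee-cc)^2+(ff-dd)^2) * (bb*cc - aa*dd + ff*gg - ee*hh)) * hk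
      | linear_combination

end Aux

theorem stmt_4 (f : E4 → E4) (hdiff : Differentiable ℝ f)
    (hanti : ∀ p : E4, (fderiv ℝ f p) ∘L iC = -(iC ∘L fderiv ℝ f p))
    (p : E4)
    (h1 : ⟪fderiv ℝ f p (e 1), fderiv ℝ f p (e 2)⟫ = 0)
    (h2 : ⟪fderiv ℝ f p (e 0), fderiv ℝ f p (e 3)⟫ = 0) :
    Sp f p * Sp f p =
      -(((fderiv ℝ f p (e 0) 2 - fderiv ℝ f p (e 2) 0) ^ 2 +
          (fderiv ℝ f p (e 1) 2 - fderiv ℝ f p (e 3) 0) ^ 2) /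
        ((1 + ‖fderiv ℝ f p (e 0)‖ ^ 2) * (1 + ‖fderiv ℝ f p (e 2)‖ ^ 2) -
          ⟪fderiv ℝ f p (e 0), fderiv ℝ f p (e 2)⟫ ^ 2)) • 1 := by
  have hinner : ∀ x y : E4, ⟪x, y⟫ = x 0 * y 0 + x 1 * y 1 + x 2 * y 2 + x 3 * y 3 := by
    intro x y
    simp [PiLp.inner_apply, RCLike.inner_apply, Fin.sum_univ_four]; ring
  set D := fderiv ℝ f p with hD
  set aa := D (e 0) 0 with ha; set bb := D (e 0) 1 with hb
  set ee := D (e 0) 2 with he; set ff := D (e 0) 3 with hf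
  set cc := D (e 2) 0 with hc; set dd := D (e 2) 1 with hd
  set gg := D (e 2) 2 with hg; set hh := D (e 2) 3 with hhh
  set M : Matrix (Fin 4) (Fin 4) ℝ := !![aa,bb,cc,dd; bb,-aa,dd,-cc; ee,ff,gg,hh; ff,-ee,hh,-gg] with hMdef
  have h10 : D (e 1) = -(iC (D (e 0))) := by
    have := congrArg (fun T : E4 →L[ℝ] E4 => T (e 0)) (hanti p)
    simpa [iC_e0] using this
  have h32 : D (e 3) = -(iC (D (e 2))) := by
    have := congrArg (fun T : E4 →L[ℝ] E4 => T (e 2)) (hanti p)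
    simpa [iC_e2] using this
  have hM : D = Matrix.toEuclideanCLM (𝕜 := ℝ) M := by
    have hv0 : D (e 0) = (Matrix.toEuclideanCLM (𝕜 := ℝ) M) (e 0) := by
      ext k; rw [clm_of_matrix_apply]; fin_cases k <;> rfl
    have hv2 : D (e 2) = (Matrix.toEuclideanCLM (𝕜 := ℝ) M) (e 2) := by
      ext k; rw [clm_of_matrix_apply]; fin_cases k <;> rfl
    have hv1 : D (e 1) = (Matrix.toEuclideanCLM (𝕜 := ℝ) M) (e 1) := by
      rw [h10]; ext k; rw [clm_of_matrix_apply]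
      have hneg : ∀ k : Fin 4, (-(iC (D (e 0)))) k = -((iC (D (e 0))) k) := fun _ => rfl
      fin_cases k <;>
        simp [hneg, iC_apply, Matrix.mulVec, dotProduct, Fin.sum_univ_four,
          Matrix.vecHead, Matrix.vecTail, M, aa, bb, cc, dd, ee, ff, gg, hh]
    have hv3 : D (e 3) = (Matrix.toEuclideanCLM (𝕜 := ℝ) M) (e 3) := by
      rw [h32]; ext k; rw [clm_of_matrix_apply]
      have hneg : ∀ k : Fin 4, (-(iC (D (e 2)))) k = -((iC (D (e 2))) k) := fun _ => rfl
      fin_cases k <;>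
        simp [hneg, iC_apply, Matrix.mulVec, dotProduct, Fin.sum_univ_four,
          Matrix.vecHead, Matrix.vecTail, M, aa, bb, cc, dd, ee, ff, gg, hh]
    apply ContinuousLinearMap.coe_injective
    apply Module.Basis.ext (PiLp.basisFun 2 ℝ (Fin 4))
    intro i
    have hbe : ∀ j : Fin 4, (PiLp.basisFun 2 ℝ (Fin 4)) j = e j := by
      intro j; rw [PiLp.basisFun_apply]; rfl
    rw [hbe]
    show D (e i) = Matrix.toEuclideanCLM (𝕜 := ℝ) M (e i)
    fin_cases i
    · exact hv0
    · exact hv1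
    · exact hv2
    · exact hv3
  have hcoord : ∀ j k : Fin 4, D (e j) k = M k j := by
    intro j k; rw [hM, clm_of_matrix_apply]
  have c10 : D (e 1) 0 = bb := by rw [hcoord 1 0]; rfl
  have c11 : D (e 1) 1 = -aa := by rw [hcoord 1 1]; rfl
  have c12 : D (e 1) 2 = ff := by rw [hcoord 1 2]; rfl
  have c13 : D (e 1) 3 = -ee := by rw [hcoord 1 3]; rfl
  have c30 : D (e 3) 0 = dd := by rw [hcoord 3 0]; rfl
  have c31 : D (e 3) 1 = -cc := by rw [hcoord 3 1]; rfl
  have c32 : D (e 3) 2 = hh := by rw [hcoord 3 2]; rfl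
  have c33 : D (e 3) 3 = -gg := by rw [hcoord 3 3]; rfl
  have hk : bb * cc - aa * dd + ff * gg - ee * hh = 0 := by
    have h := h1
    rw [hinner, c10, c11, c12, c13] at h
    linear_combination h
  -- scalar identifications
  have hn0 : ‖D (e 0)‖ ^ 2 = aa^2 + bb^2 + ee^2 + ff^2 := by
    rw [← real_inner_self_eq_norm_sq, hinner]; ring
  have hn2 : ‖D (e 2)‖ ^ 2 = cc^2 + dd^2 + gg^2 + hh^2 := by
    rw [← real_inner_self_eq_norm_sq, hinner]; ring
  have hi02 : ⟪D (e 0), D (e 2)⟫ = aa*cc + bb*dd + ee*gg + ff*hh := by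
    rw [hinner]
  -- abbreviations
  set den : ℝ := (1+(aa^2+bb^2+ee^2+ff^2))*(1+(cc^2+dd^2+gg^2+hh^2)) - (aa*cc+bb*dd+ee*gg+ff*hh)^2 with hden
  have hden0 : den ≠ 0 := by
    have hlag : den = 1 + (aa^2+bb^2+ee^2+ff^2) + (cc^2+dd^2+gg^2+hh^2) +
        ((aa*dd-bb*cc)^2 + (aa*gg-ee*cc)^2 + (aa*hh-ff*cc)^2 +
          (bb*gg-ee*dd)^2 + (bb*hh-ff*dd)^2 + (ee*hh-ff*gg)^2) := by
      rw [hden]; ring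
    have hpos : (0:ℝ) < den := by rw [hlag]; positivity
    exact ne_of_gt hpos
  set Gm : Matrix (Fin 4) (Fin 4) ℝ := 1 + Mᵀ * M with hGm
  set Cm : Matrix (Fin 4) (Fin 4) ℝ :=
    ((2 + (aa^2+bb^2+ee^2+ff^2) + (cc^2+dd^2+gg^2+hh^2)) : ℝ) • (1 : Matrix (Fin 4) (Fin 4) ℝ) - Gm with hCm
  have hGC : Gm * Cm = den • 1 := key1 aa bb cc dd ee ff gg hh hk
  have hCG : Cm * Gm = den • 1 := by
    have hcomm : Cm * Gm = Gm * Cm := by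
      rw [hCm, Matrix.sub_mul, Matrix.mul_sub, Matrix.smul_mul, Matrix.mul_smul, one_mul, mul_one]
    rw [hcomm, hGC]
  set Gi : Matrix (Fin 4) (Fin 4) ℝ := den⁻¹ • Cm with hGi
  have hGGi : Gm * Gi = 1 := by
    rw [hGi, Matrix.mul_smul, hGC, smul_smul, inv_mul_cancel₀ hden0, one_smul]
  have hGiG : Gi * Gm = 1 := by
    rw [hGi, Matrix.smul_mul, hCG, smul_smul, inv_mul_cancel₀ hden0, one_smul]
  -- operator level
  have hadj : ContinuousLinearMap.adjoint (Matrix.toEuclideanCLM (𝕜 := ℝ) M) =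
      Matrix.toEuclideanCLM (𝕜 := ℝ) Mᵀ := by
    have hstar : star M = Mᵀ := by
      ext i j
      simp [Matrix.star_apply]
    rw [← ContinuousLinearMap.star_eq_adjoint, ← StarHomClass.map_star, hstar]
  have hone : (1 : E4 →L[ℝ] E4) = Matrix.toEuclideanCLM (𝕜 := ℝ) (1 : Matrix (Fin 4) (Fin 4) ℝ) :=
    (_root_.map_one _).symm
  have hGop : 1 + ContinuousLinearMap.adjoint D * D = Matrix.toEuclideanCLM (𝕜 := ℝ) Gm := by
    rw [hM, hadj, ← _root_.map_mul, hone, ← _root_.map_add, hGm]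
  have hBop : ContinuousLinearMap.adjoint D - D = Matrix.toEuclideanCLM (𝕜 := ℝ) (Mᵀ - M) := by
    rw [hM, hadj, ← _root_.map_sub]
  have hu1 : Matrix.toEuclideanCLM (𝕜 := ℝ) Gm * Matrix.toEuclideanCLM (𝕜 := ℝ) Gi = 1 := by
    rw [← _root_.map_mul, hGGi, _root_.map_one]
  have hu2 : Matrix.toEuclideanCLM (𝕜 := ℝ) Gi * Matrix.toEuclideanCLM (𝕜 := ℝ) Gm = 1 := by
    rw [← _root_.map_mul, hGiG, _root_.map_one]
  have hinv : Ring.inverse (Matrix.toEuclideanCLM (𝕜 := ℝ) Gm) = Matrix.toEuclideanCLM (𝕜 := ℝ) Gi :=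
    Ring.inverse_unit ⟨Matrix.toEuclideanCLM (𝕜 := ℝ) Gm, Matrix.toEuclideanCLM (𝕜 := ℝ) Gi, hu1, hu2⟩
  have hSp : Sp f p = Matrix.toEuclideanCLM (𝕜 := ℝ) (Gi * (Mᵀ - M)) := by
    show Ring.inverse (1 + ContinuousLinearMap.adjoint D * D) * (ContinuousLinearMap.adjoint D - D)
        = Matrix.toEuclideanCLM (𝕜 := ℝ) (Gi * (Mᵀ - M))
    rw [hGop, hBop, hinv, ← _root_.map_mul]
  -- final matrix computation
  set num : ℝ := (ee-cc)^2 + (ff-dd)^2 with hnum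
  have hmat : Gi * (Mᵀ - M) * (Gi * (Mᵀ - M)) = (-(num/den)) • 1 := by
    have hE : Cm * (Mᵀ - M) = Emat aa bb cc dd ee ff gg hh := key2 aa bb cc dd ee ff gg hh
    have hEE : Emat aa bb cc dd ee ff gg hh * Emat aa bb cc dd ee ff gg hh = (-(num * den)) • 1 :=
      key3 aa bb cc dd ee ff gg hh hk
    rw [hGi]
    simp only [smul_mul_assoc, mul_smul_comm, hE, hEE, smul_smul]
    congr 1
    field_simp
  have hfinal : Sp f p * Sp f p = (-(num/den)) • 1 := by
    rw [hSp, ← _root_.map_mul, hmat, _root_.map_smul, _root_.map_one]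
  rw [hfinal, hn0, hn2, hi02, c12, c30]

end
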